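/- Let p ≥ 2 and f as in the change of variables. Then for all t ≥ 0, f(t)/2 ≤ t f'(t) ≤ f(t). -/

import Mathlib

/-- `f(t)/2 ≤ t f'(t) ≤ f(t)` for all `t ≥ 0`. -/
theorem stmt2 (p : ℝ) (hp : 2 ≤ p) (f : ℝ → ℝ)
    (hodd : ∀ t : ℝ, f (-t) = - f t)
    (hf0 : f 0 = 0)
    (hf' : ∀ t : ℝ, HasDerivAt f ((1 + 2 ^ (p - 1) * |f t| ^ p) ^ (-(1 / p))) t) :
    ∀ t : ℝ, 0 ≤ t → f t / 2 ≤ t * deriv f t ∧ t * deriv f t ≤ f t := by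
  have hp0 : (0 : ℝ) < p := by linarith
  set c : ℝ := 2 ^ (p - 1) with hc
  have hcpos : (0 : ℝ) < c := Real.rpow_pos_of_pos two_pos _
  set G : ℝ → ℝ := fun s => (1 + c * |s| ^ p) ^ (1 / p) with hGdef
  have hA : ∀ s : ℝ, (0 : ℝ) < 1 + c * |s| ^ p := by
    intro s
    have : (0:ℝ) ≤ c * |s| ^ p := by positivity
    linarith
  have hGpos : ∀ s, 0 < G s := fun s => Real.rpow_pos_of_pos (hA s) _
  -- continuity of G
  have hGcont : Continuous G := by
    apply Continuous.rpow_const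
    · exact continuous_const.add (continuous_const.mul
        (continuous_abs.rpow_const fun x => Or.inr hp0.le))
    · intro x; exact Or.inr (by positivity)
  -- f' in terms of G
  have hf'G : ∀ t, deriv f t = (G (f t))⁻¹ := by
    intro t
    rw [(hf' t).deriv, Real.rpow_neg (hA (f t)).le]
  -- f differentiable
  have hfdiff : Differentiable ℝ f := fun t => (hf' t).differentiableAt
  -- f monotone, so f t ≥ 0 for t ≥ 0
  have hfmono : Monotone f := by
    apply monotone_of_deriv_nonneg hfdiff
    intro t
    rw [hf'G t]
    exact (inv_pos.mpr (hGpos _)).le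
  -- the integral function
  set I : ℝ → ℝ := fun y => ∫ s in (0:ℝ)..y, G s with hIdef
  have hI : ∀ y, HasDerivAt I (G y) y :=
    fun y => intervalIntegral.integral_hasDerivAt_right
      (hGcont.intervalIntegrable _ _)
      (hGcont.stronglyMeasurableAtFilter _ _) hGcont.continuousAt
  have hIcont : Continuous I := by
    have : Differentiable ℝ I := fun y => (hI y).differentiableAt
    exact this.continuous
  -- key identity : I (f t) = t for all t
  have hKey : ∀ t, I (f t) = t := by
    have hdiff : Differentiable ℝ (fun t => I (f t) - t) := by
      intro t
      exact (((hI (f t)).comp t (hf' t)).sub (hasDerivAt_id t)).differentiableAt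
    have hderiv : ∀ t, deriv (fun t => I (f t) - t) t = 0 := by
      intro t
      have h1 : HasDerivAt (fun t => I (f t) - t) (G (f t) * deriv f t - 1) t := by
        rw [(hf' t).deriv]
        exact (((hI (f t)).comp t (hf' t)).sub (hasDerivAt_id t))
      rw [h1.deriv, hf'G t, mul_inv_cancel₀ (hGpos (f t)).ne', sub_self]
    intro t
    have := is_const_of_deriv_eq_zero hdiff hderiv t 0
    simp only [hf0] at this
    have hI0 : I 0 = 0 := intervalIntegral.integral_same
    rw [hI0] at this
    linarith [this]
  -- upper bound on I : I y ≤ y * G y for y ≥ 0 (since G is monotone on [0,∞))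
  have hGmono : ∀ s y : ℝ, 0 ≤ s → s ≤ y → G s ≤ G y := by
    intro s y hs hsy
    apply Real.rpow_le_rpow (hA s).le _ (by positivity)
    have : |s| ^ p ≤ |y| ^ p := by
      apply Real.rpow_le_rpow (abs_nonneg s) _ hp0.le
      rw [abs_of_nonneg hs, abs_of_nonneg (hs.trans hsy)]
      exact hsy
    nlinarith
  have hIub : ∀ y : ℝ, 0 ≤ y → I y ≤ y * G y := by
    intro y hy
    have : I y ≤ ∫ _ in (0:ℝ)..y, G y := by
      apply intervalIntegral.integral_mono_on hy
        (hGcont.intervalIntegrable _ _)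
        (intervalIntegrable_const)
      intro x hx
      exact hGmono x y hx.1 hx.2
    simpa using this
  -- lower bound : y * G y ≤ 2 * I y for y ≥ 0, via derivative argument
  -- derivative of G on y > 0
  have hGderiv : ∀ y : ℝ, 0 < y →
      HasDerivAt G (c * y ^ (p - 1) * (1 + c * y ^ p) ^ (1 / p - 1)) y := by
    intro y hy
    have hAy : (0:ℝ) < 1 + c * y ^ p := by
      have : (0:ℝ) ≤ c * y ^ p := by positivity
      linarith
    have hinner : HasDerivAt (fun s : ℝ => 1 + c * s ^ p) (c * (p * y ^ (p - 1))) y :=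
      ((Real.hasDerivAt_rpow_const (p := p) (Or.inl hy.ne')).const_mul c).const_add 1
    have houter : HasDerivAt (fun x : ℝ => x ^ (1 / p))
        (1 / p * (1 + c * y ^ p) ^ (1 / p - 1)) (1 + c * y ^ p) :=
      Real.hasDerivAt_rpow_const (Or.inl hAy.ne')
    have hcomp := houter.comp y hinner
    have heq : (fun s : ℝ => (1 + c * s ^ p) ^ (1/p)) =ᶠ[nhds y] G := by
      filter_upwards [eventually_gt_nhds hy] with s hs
      simp [hGdef, abs_of_nonneg hs.le]
    have hval : 1 / p * (1 + c * y ^ p) ^ (1 / p - 1) * (c * (p * y ^ (p - 1)))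
        = c * y ^ (p - 1) * (1 + c * y ^ p) ^ (1 / p - 1) := by
      field_simp
    rw [hval] at hcomp
    exact hcomp.congr_of_eventuallyEq heq.symm
  -- Φ y := 2 * I y - y * G y is monotone on [0, ∞)
  set Φ : ℝ → ℝ := fun y => 2 * I y - y * G y with hΦdef
  have hΦderiv : ∀ y : ℝ, 0 < y → HasDerivAt Φ
      (2 * G y - (G y + y * (c * y ^ (p - 1) * (1 + c * y ^ p) ^ (1 / p - 1)))) y := by
    intro y hy
    have := ((hI y).const_mul 2).sub ((hasDerivAt_id y).mul (hGderiv y hy))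
    simp only [one_mul, id_eq] at this
    exact this
  have hΦderiv_nonneg : ∀ y : ℝ, 0 < y →
      0 ≤ 2 * G y - (G y + y * (c * y ^ (p - 1) * (1 + c * y ^ p) ^ (1 / p - 1))) := by
    intro y hy
    have hAy : (0:ℝ) < 1 + c * y ^ p := by
      have : (0:ℝ) ≤ c * y ^ p := by positivity
      linarith
    have hyp : y * y ^ (p - 1) = y ^ p := by
      nth_rewrite 1 [← Real.rpow_one y]
      rw [← Real.rpow_add hy]
      ring_nf
    have h1 : y * (c * y ^ (p - 1) * (1 + c * y ^ p) ^ (1 / p - 1))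
        = c * y ^ p * (1 + c * y ^ p) ^ (1 / p - 1) := by
      rw [← hyp]; ring
    have h2 : c * y ^ p * (1 + c * y ^ p) ^ (1 / p - 1)
        ≤ (1 + c * y ^ p) * (1 + c * y ^ p) ^ (1 / p - 1) := by
      apply mul_le_mul_of_nonneg_right (by linarith)
        (Real.rpow_nonneg hAy.le _)
    have h3 : (1 + c * y ^ p) * (1 + c * y ^ p) ^ (1 / p - 1) = (1 + c * y ^ p) ^ (1/p) := by
      nth_rewrite 1 [← Real.rpow_one (1 + c * y ^ p)]
      rw [← Real.rpow_add hAy]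
      ring_nf
    have h4 : G y = (1 + c * y ^ p) ^ (1/p) := by
      simp [hGdef, abs_of_nonneg hy.le]
    rw [h1]
    rw [h4] at *
    linarith [h2, h3.le, h3.ge]
  have hΦmono : MonotoneOn Φ (Set.Ici 0) := by
    apply monotoneOn_of_deriv_nonneg (convex_Ici 0)
    · exact ((continuous_const.mul hIcont).sub (continuous_id.mul hGcont)).continuousOn
    · intro y hy
      rw [interior_Ici] at hy
      exact (hΦderiv y hy).differentiableAt.differentiableWithinAt
    · intro y hy
      rw [interior_Ici] at hy
      rw [(hΦderiv y hy).deriv]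
      exact hΦderiv_nonneg y hy
  have hΦ0 : Φ 0 = 0 := by simp [hΦdef, hIdef, intervalIntegral.integral_same]
  have hIlb : ∀ y : ℝ, 0 ≤ y → y * G y ≤ 2 * I y := by
    intro y hy
    have := hΦmono (Set.self_mem_Ici) hy hy
    rw [hΦ0] at this
    simp only [hΦdef] at this
    linarith
  -- conclude
  intro t ht
  have hft : 0 ≤ f t := by
    have := hfmono ht
    rwa [hf0] at this
  have hG : 0 < G (f t) := hGpos (f t)
  have h1 : f t * G (f t) ≤ 2 * t := by
    have := hIlb (f t) hft
    rwa [hKey t] at this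
  have h2 : t ≤ f t * G (f t) := by
    have := hIub (f t) hft
    rwa [hKey t] at this
  rw [hf'G t]
  constructor
  · rw [div_le_iff₀ (by norm_num : (0:ℝ) < 2)]
    calc f t = f t * G (f t) * (G (f t))⁻¹ := by field_simp
    _ ≤ 2 * t * (G (f t))⁻¹ := mul_le_mul_of_nonneg_right h1 (inv_nonneg.mpr hG.le)
    _ = t * (G (f t))⁻¹ * 2 := by ring
  · calc t * (G (f t))⁻¹ ≤ f t * G (f t) * (G (f t))⁻¹ :=
        mul_le_mul_of_nonneg_right h2 (inv_nonneg.mpr hG.le)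
    _ = f t := by field_simp
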